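/- (Scaling in E_σ^s, dilation λ > 1) Let s ≤ 0, φ ∈ E_σ^s(ℝ^d) with supp φ̂ ⊂ {ξ : |ξ| ≥ ε₀} for some ε₀ > 0, and define φ_λ(x) = φ(λx). Then for λ > 1: if σ ≤ 0, ‖φ_λ‖_{E_σ^s} ≤ C λ^{−d/2} 2^{s(λ−1)ε₀} ‖φ‖_{E_σ^s}; if σ > 0, ‖φ_λ‖_{E_σ^s} ≤ C λ^{−d/2+σ} 2^{s(λ−1)ε₀} ‖φ‖_{E_σ^s}. -/

import Mathlib

open MeasureTheory FourierTransform ENNReal RealInnerProductSpace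

noncomputable section

abbrev Vd (d : ℕ) := EuclideanSpace ℝ (Fin d)

def l1 {d : ℕ} (ξ : Vd d) : ℝ := ∑ i, |ξ i|

def jap {d : ℕ} (ξ : Vd d) : ℝ := Real.sqrt (1 + ‖ξ‖ ^ 2)

/-- The E_σ^s norm: ‖⟨ξ⟩^σ 2^{s|ξ|} f̂(ξ)‖_{L²}. -/
def Enorm (d : ℕ) (s σ : ℝ) (f : Vd d → ℂ) : ℝ≥0∞ :=
  eLpNorm (fun ξ => ((jap ξ ^ σ * (2 : ℝ) ^ (s * l1 ξ) : ℝ) : ℂ) * 𝓕 f ξ) 2 volume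

lemma jap_pos {d : ℕ} (ξ : Vd d) : 0 < jap ξ := Real.sqrt_pos.2 (by positivity)

lemma l1_smul {d : ℕ} (lam : ℝ) (hl : 0 ≤ lam) (ξ : Vd d) : l1 (lam • ξ) = lam * l1 ξ := by
  simp [l1, Finset.mul_sum, abs_mul, abs_of_nonneg hl]

lemma jap_mono {d : ℕ} {ξ η : Vd d} (h : ‖ξ‖ ≤ ‖η‖) : jap ξ ≤ jap η :=
  Real.sqrt_le_sqrt (by nlinarith [norm_nonneg ξ])

/-- Fourier transform of a dilation. -/
lemma fourier_scale {d : ℕ} (φ : Vd d → ℂ) {lam : ℝ} (hl : 0 < lam) (ξ : Vd d) :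
    𝓕 (fun x => φ (lam • x)) ξ = ((lam ^ d : ℝ)⁻¹ : ℝ) • 𝓕 φ (lam⁻¹ • ξ) := by
  rw [Real.fourier_eq, Real.fourier_eq]
  have key : ∀ x : Vd d, 𝐞 (-(inner ℝ x ξ : ℝ)) • φ (lam • x)
      = (fun y => 𝐞 (-(inner ℝ y (lam⁻¹ • ξ) : ℝ)) • φ y) (lam • x) := by
    intro x
    have : (inner ℝ (lam • x : Vd d) (lam⁻¹ • ξ) : ℝ) = (inner ℝ x ξ : ℝ) := by
      rw [real_inner_smul_left, real_inner_smul_right]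
      field_simp
    simp [this]
  calc ∫ x, 𝐞 (-(inner ℝ x ξ : ℝ)) • φ (lam • x)
      = ∫ x, (fun y => 𝐞 (-(inner ℝ y (lam⁻¹ • ξ) : ℝ)) • φ y) (lam • x) := by
        exact integral_congr_ae (Filter.Eventually.of_forall key)
    _ = |((lam ^ Module.finrank ℝ (Vd d)):ℝ)⁻¹| • ∫ y, 𝐞 (-(inner ℝ y (lam⁻¹ • ξ) : ℝ)) • φ y :=
        MeasureTheory.Measure.integral_comp_smul volume
          (fun y => 𝐞 (-(inner ℝ y (lam⁻¹ • ξ) : ℝ)) • φ y) lam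
    _ = ((lam ^ d : ℝ)⁻¹ : ℝ) • ∫ y, 𝐞 (-(inner ℝ y (lam⁻¹ • ξ) : ℝ)) • φ y := by
        rw [finrank_euclideanSpace_fin, abs_of_nonneg (by positivity)]

/-- change of variables for the L² norm. -/
lemma eLpNorm_comp_smul {d : ℕ} (H : Vd d → ℂ) {lam : ℝ} (hl : 0 < lam) :
    eLpNorm (fun ξ => H (lam⁻¹ • ξ)) 2 volume
      = ENNReal.ofReal ((lam ^ d : ℝ) ^ ((2:ℝ)⁻¹)) * eLpNorm H 2 volume := by
  have h2 : ((2:ℝ≥0∞)).toReal = 2 := by simp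
  rw [eLpNorm_eq_lintegral_rpow_enorm_toReal (by norm_num) (by norm_num),
      eLpNorm_eq_lintegral_rpow_enorm_toReal (by norm_num) (by norm_num), h2]
  have hinv : (lam : ℝ)⁻¹ ≠ 0 := inv_ne_zero hl.ne'
  set e : Vd d ≃ᵐ Vd d := MeasurableEquiv.smul₀ (lam⁻¹ : ℝ) hinv with he
  have hmap : Measure.map (fun x : Vd d => (lam⁻¹ : ℝ) • x) volume
      = ENNReal.ofReal ((lam ^ d : ℝ)) • volume := by
    rw [Measure.map_addHaar_smul volume hinv, finrank_euclideanSpace_fin]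
    congr 1
    rw [← inv_pow, inv_inv, abs_of_nonneg (by positivity)]
  have : ∫⁻ ξ, ‖H ((lam⁻¹ : ℝ) • ξ)‖ₑ ^ (2:ℝ) ∂volume
      = ENNReal.ofReal (lam ^ d : ℝ) * ∫⁻ ξ, ‖H ξ‖ₑ ^ (2:ℝ) ∂volume := by
    have h1 := MeasureTheory.lintegral_map_equiv (μ := volume)
      (fun y => ‖H y‖ₑ ^ (2:ℝ)) e
    have hcoe : ⇑e = fun x : Vd d => (lam⁻¹ : ℝ) • x := rfl
    rw [hcoe, hmap, lintegral_smul_measure] at h1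
    exact h1.symm
  rw [this, ENNReal.mul_rpow_of_nonneg _ _ (by norm_num : (0:ℝ) ≤ 1/2),
      ← ENNReal.ofReal_rpow_of_pos (by positivity)]
  norm_num

/-- weight comparison on the support. -/
lemma weight_bound {d : ℕ} (s σ ε₀ lam : ℝ) (hs : s ≤ 0) (hε : 0 < ε₀) (hlam : 1 < lam)
    (η : Vd d) (hη : ε₀ ≤ l1 η) :
    jap (lam • η) ^ σ * (2:ℝ) ^ (s * l1 (lam • η)) ≤
      (lam ^ (max σ 0) * (2:ℝ) ^ (s * (lam - 1) * ε₀)) *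
        (jap η ^ σ * (2:ℝ) ^ (s * l1 η)) := by
  have hl0 : (0:ℝ) < lam := lt_trans one_pos hlam
  have hjap : jap (lam • η) ^ σ ≤ lam ^ (max σ 0) * jap η ^ σ := by
    rcases le_or_gt σ 0 with hσ | hσ
    · rw [max_eq_right hσ, Real.rpow_zero, one_mul]
      have hle : jap η ≤ jap (lam • η) := by
        apply jap_mono
        rw [norm_smul, Real.norm_eq_abs, abs_of_nonneg hl0.le]
        nlinarith [norm_nonneg η]
      exact Real.rpow_le_rpow_of_nonpos (jap_pos η) hle hσ
    · rw [max_eq_left hσ.le]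
      have hle : jap (lam • η) ≤ lam * jap η := by
        have h1 : jap (lam • η) ≤ Real.sqrt (lam ^ 2 * (1 + ‖η‖ ^ 2)) := by
          apply Real.sqrt_le_sqrt
          rw [norm_smul, Real.norm_eq_abs, abs_of_nonneg hl0.le]
          nlinarith [norm_nonneg η]
        rwa [Real.sqrt_mul (by positivity), Real.sqrt_sq hl0.le] at h1
      calc jap (lam • η) ^ σ ≤ (lam * jap η) ^ σ :=
            Real.rpow_le_rpow (jap_pos _).le hle hσ.le
        _ = lam ^ σ * jap η ^ σ := Real.mul_rpow hl0.le (jap_pos η).le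
  have hexp : (2:ℝ) ^ (s * l1 (lam • η)) ≤ (2:ℝ) ^ (s * (lam - 1) * ε₀) * (2:ℝ) ^ (s * l1 η) := by
    rw [l1_smul lam hl0.le, ← Real.rpow_add (by norm_num : (0:ℝ) < 2)]
    apply Real.rpow_le_rpow_of_exponent_le (by norm_num)
    have h1 : s * (lam - 1) * l1 η ≤ s * (lam - 1) * ε₀ := by
      apply mul_le_mul_of_nonpos_left hη
      nlinarith
    nlinarith
  calc jap (lam • η) ^ σ * (2:ℝ) ^ (s * l1 (lam • η))
      ≤ (lam ^ (max σ 0) * jap η ^ σ) * ((2:ℝ) ^ (s * (lam - 1) * ε₀) * (2:ℝ) ^ (s * l1 η)) := by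
        apply mul_le_mul hjap hexp (Real.rpow_nonneg (by norm_num) _)
          (mul_nonneg (Real.rpow_nonneg hl0.le _) (Real.rpow_nonneg (jap_pos η).le _))
    _ = (lam ^ (max σ 0) * (2:ℝ) ^ (s * (lam - 1) * ε₀)) * (jap η ^ σ * (2:ℝ) ^ (s * l1 η)) := by
        ring

lemma main_bound (d : ℕ) (s σ ε₀ : ℝ) (hs : s ≤ 0) (hε : 0 < ε₀) (φ : Vd d → ℂ)
    (hφ : Function.support (𝓕 φ) ⊆ {ξ : Vd d | ε₀ ≤ l1 ξ}) (lam : ℝ) (hlam : 1 < lam) :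
    Enorm d s σ (fun x => φ (lam • x)) ≤
      ENNReal.ofReal (lam ^ (-(d : ℝ)/2 + max σ 0) * (2 : ℝ) ^ (s * (lam - 1) * ε₀)) *
        Enorm d s σ φ := by
  have hl0 : (0:ℝ) < lam := lt_trans one_pos hlam
  set w : Vd d → ℝ := fun ξ => jap ξ ^ σ * (2:ℝ) ^ (s * l1 ξ) with hw
  have hwpos : ∀ ξ, 0 < w ξ := fun ξ => by
    have := jap_pos ξ; positivity
  set A : ℝ := lam ^ (max σ 0) * (2:ℝ) ^ (s * (lam - 1) * ε₀) with hA
  have hApos : 0 < A := by positivity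
  set H : Vd d → ℂ := fun ξ => (w ξ : ℂ) * 𝓕 φ ξ with hH
  -- step 1 : rewrite the Fourier transform
  have step1 : Enorm d s σ (fun x => φ (lam • x))
      = ENNReal.ofReal ((lam ^ d : ℝ)⁻¹) *
        eLpNorm (fun ξ => (w ξ : ℂ) * 𝓕 φ (lam⁻¹ • ξ)) 2 volume := by
    rw [Enorm]
    have : (fun ξ : Vd d => ((jap ξ ^ σ * (2:ℝ) ^ (s * l1 ξ) : ℝ) : ℂ) * 𝓕 (fun x => φ (lam • x)) ξ)
        = ((lam ^ d : ℝ)⁻¹ : ℝ) • fun ξ => (w ξ : ℂ) * 𝓕 φ (lam⁻¹ • ξ) := by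
      funext ξ
      rw [fourier_scale φ hl0 ξ]
      simp only [hw, Pi.smul_apply, Complex.real_smul]
      push_cast
      ring
    rw [this, eLpNorm_const_smul, Real.enorm_eq_ofReal (by positivity)]
  -- step 2 : pointwise bound
  have step2 : eLpNorm (fun ξ => (w ξ : ℂ) * 𝓕 φ (lam⁻¹ • ξ)) 2 volume
      ≤ ENNReal.ofReal A * eLpNorm (fun ξ => H (lam⁻¹ • ξ)) 2 volume := by
    have h := eLpNorm_const_smul (μ := volume) (p := (2:ℝ≥0∞)) (A : ℂ) (fun ξ => H (lam⁻¹ • ξ))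
    calc eLpNorm (fun ξ => (w ξ : ℂ) * 𝓕 φ (lam⁻¹ • ξ)) 2 volume
        ≤ eLpNorm ((A:ℂ) • fun ξ => H (lam⁻¹ • ξ)) 2 volume := by
          apply eLpNorm_mono
          intro ξ
          rcases eq_or_ne (𝓕 φ (lam⁻¹ • ξ)) 0 with h0 | h0
          · simp [h0, hH]
          · have hsupp : ε₀ ≤ l1 (lam⁻¹ • ξ) := hφ (Function.mem_support.2 h0)
            have hwb : w ξ ≤ A * w (lam⁻¹ • ξ) := by
              have := weight_bound s σ ε₀ lam hs hε hlam (lam⁻¹ • ξ) hsupp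
              rwa [smul_inv_smul₀ hl0.ne'] at this
            simp only [Pi.smul_apply, smul_eq_mul, hH, norm_mul, Complex.norm_real]
            rw [Real.norm_eq_abs, abs_of_nonneg (hwpos _).le,
                Real.norm_eq_abs, abs_of_nonneg hApos.le, ← mul_assoc]
            apply mul_le_mul_of_nonneg_right _ (norm_nonneg _)
            rwa [Real.norm_eq_abs, abs_of_nonneg (hwpos _).le]
      _ = ENNReal.ofReal A * eLpNorm (fun ξ => H (lam⁻¹ • ξ)) 2 volume := by
          rw [h]
          congr 1
          rw [← Real.enorm_eq_ofReal hApos.le]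
          rw [← ofReal_norm, ← ofReal_norm, Complex.norm_real]
  -- step 3 : change of variables
  have step3 : eLpNorm (fun ξ => H (lam⁻¹ • ξ)) 2 volume
      = ENNReal.ofReal ((lam ^ d : ℝ) ^ ((2:ℝ)⁻¹)) * Enorm d s σ φ := by
    rw [eLpNorm_comp_smul H hl0]; rfl
  calc Enorm d s σ (fun x => φ (lam • x))
      = ENNReal.ofReal ((lam ^ d : ℝ)⁻¹) *
        eLpNorm (fun ξ => (w ξ : ℂ) * 𝓕 φ (lam⁻¹ • ξ)) 2 volume := step1
    _ ≤ ENNReal.ofReal ((lam ^ d : ℝ)⁻¹) *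
        (ENNReal.ofReal A * (ENNReal.ofReal ((lam ^ d : ℝ) ^ ((2:ℝ)⁻¹)) * Enorm d s σ φ)) := by
        apply mul_le_mul_right
        rw [← step3]
        exact step2
    _ = (ENNReal.ofReal ((lam ^ d : ℝ)⁻¹) * ENNReal.ofReal A *
          ENNReal.ofReal ((lam ^ d : ℝ) ^ ((2:ℝ)⁻¹))) * Enorm d s σ φ := by ring
    _ = ENNReal.ofReal (lam ^ (-(d : ℝ)/2 + max σ 0) * (2 : ℝ) ^ (s * (lam - 1) * ε₀)) *
          Enorm d s σ φ := by
        congr 1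
        rw [← ENNReal.ofReal_mul (by positivity), ← ENNReal.ofReal_mul (by positivity)]
        congr 1
        have hpow : (lam ^ d : ℝ) = lam ^ (d : ℝ) := (Real.rpow_natCast lam d).symm
        rw [hA, hpow, ← Real.rpow_neg hl0.le, ← Real.rpow_mul hl0.le]
        rw [show ((lam ^ (-(d:ℝ)) * (lam ^ (max σ 0) * (2:ℝ) ^ (s * (lam - 1) * ε₀)) *
            lam ^ ((d:ℝ) * (2:ℝ)⁻¹))) =
            (lam ^ (-(d:ℝ)) * lam ^ (max σ 0) * lam ^ ((d:ℝ) * (2:ℝ)⁻¹)) *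
            (2:ℝ) ^ (s * (lam - 1) * ε₀) from by ring]
        rw [← Real.rpow_add hl0, ← Real.rpow_add hl0]
        congr 2
        ring

/-- scaling in E_σ^s for dilations λ > 1: if s ≤ 0 and
supp φ̂ ⊂ {|ξ| ≥ ε₀}, then ‖φ(λ·)‖_{E_σ^s} ≤ C λ^{−d/2} 2^{s(λ−1)ε₀} ‖φ‖_{E_σ^s}
for σ ≤ 0, and ‖φ(λ·)‖_{E_σ^s} ≤ C λ^{−d/2+σ} 2^{s(λ−1)ε₀} ‖φ‖_{E_σ^s} for σ > 0. -/
theorem stmt10 (d : ℕ) (s σ ε₀ : ℝ) (hs : s ≤ 0) (hε : 0 < ε₀) :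
    ∃ C : ℝ, 0 < C ∧ ∀ φ : Vd d → ℂ,
      Function.support (𝓕 φ) ⊆ {ξ : Vd d | ε₀ ≤ l1 ξ} →
      ∀ lam : ℝ, 1 < lam →
        (σ ≤ 0 → Enorm d s σ (fun x => φ (lam • x)) ≤
          ENNReal.ofReal (C * lam ^ (-(d : ℝ)/2) * (2 : ℝ) ^ (s * (lam - 1) * ε₀)) *
            Enorm d s σ φ) ∧
        (0 < σ → Enorm d s σ (fun x => φ (lam • x)) ≤
          ENNReal.ofReal (C * lam ^ (-(d : ℝ)/2 + σ) * (2 : ℝ) ^ (s * (lam - 1) * ε₀)) *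
            Enorm d s σ φ) := by
  refine ⟨1, one_pos, fun φ hφ lam hlam => ⟨fun hσ => ?_, fun hσ => ?_⟩⟩
  · have := main_bound d s σ ε₀ hs hε φ hφ lam hlam
    rwa [max_eq_right hσ, add_zero, ← one_mul (lam ^ (-(d:ℝ)/2))] at this
  · have := main_bound d s σ ε₀ hs hε φ hφ lam hlam
    rwa [max_eq_left hσ.le, ← one_mul (lam ^ (-(d:ℝ)/2 + σ))] at this
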